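/- Define the finite-L excess-entropy estimates E(L) := H(L) - L·(H(L) - H(L-1)) for L ≥ 1 and, for even L ≥ 2, E'(L) := 2H(L/2) - H(L) (the mutual information between the two halves of an L-block). Then for every even L ≥ 2: E'(L) ≤ E(L); and if the excess entropy E = Σ_{M=1}^∞ [h_μ(M) - h_μ] converges, then also E(L) ≤ E for every L ≥ 1. -/

import Mathlib

open MeasureTheory Real Filter

/-- The probability of the cylinder set of sequences beginning with the word `w`. -/
noncomputable def cylP {A : Type*} [MeasurableSpace A] (μ : Measure (ℕ → A)) {L : ℕ}
    (w : Fin L → A) : ℝ :=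
  (μ {x : ℕ → A | ∀ i : Fin L, x i.1 = w i}).toReal

/-- The block entropy `H(L)` in bits, with the convention `0 · log₂ 0 = 0`;
terms with `cylP μ w = 0` contribute `0` to the sum. -/
noncomputable def blockH {A : Type*} [MeasurableSpace A] [Fintype A]
    (μ : Measure (ℕ → A)) (L : ℕ) : ℝ :=
  -∑ w : Fin L → A, cylP μ w * Real.logb 2 (cylP μ w)

/-- The left shift on one-sided sequences. -/
def shift {A : Type*} : (ℕ → A) → (ℕ → A) := fun x n => x (n + 1)


open Finset Real


open Finset Real

noncomputable def pushp {I J : Type*} [Fintype I] [DecidableEq J]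
    (f : I → J) (p : I → ℝ) (j : J) : ℝ :=
  ∑ i ∈ univ.filter (fun i => f i = j), p i

noncomputable def ent {I : Type*} [Fintype I] (p : I → ℝ) : ℝ :=
  -∑ i, p i * Real.logb 2 (p i)

lemma pushp_nonneg {I J : Type*} [Fintype I] [DecidableEq J]
    {f : I → J} {p : I → ℝ} (hp : ∀ i, 0 ≤ p i) (j : J) : 0 ≤ pushp f p j :=
  Finset.sum_nonneg fun i _ => hp i

lemma le_pushp {I J : Type*} [Fintype I] [DecidableEq J]
    {f : I → J} {p : I → ℝ} (hp : ∀ i, 0 ≤ p i) (i : I) : p i ≤ pushp f p (f i) :=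
  Finset.single_le_sum (f := p) (fun i _ => hp i) (by simp)

lemma sum_pushp {I J : Type*} [Fintype I] [Fintype J] [DecidableEq J]
    (f : I → J) (p : I → ℝ) : ∑ j, pushp f p j = ∑ i, p i :=
  Finset.sum_fiberwise _ _ _

lemma sum_weighted_pushp {I J : Type*} [Fintype I] [Fintype J] [DecidableEq J]
    (f : I → J) (p : I → ℝ) (c : J → ℝ) :
    ∑ i, p i * c (f i) = ∑ j, pushp f p j * c j := by
  rw [← Finset.sum_fiberwise univ f (fun i => p i * c (f i))]
  refine Finset.sum_congr rfl fun j _ => ?_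
  rw [pushp, Finset.sum_mul]
  refine Finset.sum_congr rfl fun i hi => ?_
  rw [(Finset.mem_filter.1 hi).2]

/-- the fiber sum of the composed pushforward -/
lemma pushp_comp {I J K : Type*} [Fintype I] [Fintype J] [DecidableEq J] [DecidableEq K]
    (g : I → J) (v : J → K) (p : I → ℝ) (m : K) :
    ∑ k ∈ univ.filter (fun k => v k = m), pushp g p k = pushp (fun i => v (g i)) p m := by
  unfold pushp
  rw [← Finset.sum_fiberwise_of_maps_to (g := g) (t := univ.filter (fun k => v k = m))
      (s := univ.filter (fun i => v (g i) = m)) (fun i hi => by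
        simp only [mem_filter, mem_univ, true_and] at hi ⊢; exact hi)]
  refine Finset.sum_congr rfl fun k hk => ?_
  simp only [mem_filter, mem_univ, true_and] at hk
  refine Finset.sum_congr ?_ (fun _ _ => rfl)
  rw [Finset.filter_filter]
  refine Finset.filter_congr fun i _ => ?_
  constructor
  · exact fun h => ⟨by rw [h, hk], h⟩
  · exact fun h => h.2

lemma sum_mul_support {I : Type*} [Fintype I] (p : I → ℝ) (c : I → ℝ) :
    ∑ i, p i * c i = ∑ i ∈ univ.filter (fun i => p i ≠ 0), p i * c i := by
  rw [Finset.sum_filter]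
  refine Finset.sum_congr rfl fun i _ => ?_
  by_cases h : p i = 0
  · simp [h]
  · simp [h]

lemma ent_eq_support {I : Type*} [Fintype I] (p : I → ℝ) :
    ent p = -∑ i ∈ univ.filter (fun i => p i ≠ 0), p i * Real.logb 2 (p i) := by
  rw [ent, sum_mul_support]

lemma ent_pushp_eq_support {I J : Type*} [Fintype I] [Fintype J] [DecidableEq J]
    (f : I → J) (p : I → ℝ) :
    ent (pushp f p)
      = -∑ i ∈ univ.filter (fun i => p i ≠ 0), p i * Real.logb 2 (pushp f p (f i)) := by
  rw [ent, ← sum_weighted_pushp f p (fun j => Real.logb 2 (pushp f p j)), sum_mul_support]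

set_option maxHeartbeats 1000000 in
lemma ssa {I J K M : Type*} [Fintype I] [Fintype J] [Fintype K] [Fintype M]
    [DecidableEq J] [DecidableEq K] [DecidableEq M]
    (p : I → ℝ) (hp : ∀ i, 0 ≤ p i) (hsum : ∑ i, p i = 1)
    (f : I → J) (g : I → K) (u : J → M) (v : K → M)
    (hcomm : ∀ i, u (f i) = v (g i))
    (hinj : ∀ i i', f i = f i' → g i = g i' → i = i') :
    ent p + ent (pushp (fun i => u (f i)) p) ≤ ent (pushp f p) + ent (pushp g p) := by
  classical
  set pf := pushp f p with hpf
  set pg := pushp g p with hpg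
  set ph := pushp (fun i => u (f i)) p with hph
  set P : Finset I := univ.filter (fun i => p i ≠ 0) with hP
  have hpos : ∀ i ∈ P, 0 < p i := fun i hi => by
    have := (Finset.mem_filter.1 hi).2
    exact lt_of_le_of_ne (hp i) (Ne.symm this)
  have hentp : ent p = -∑ i ∈ P, p i * logb 2 (p i) := ent_eq_support p
  -- positivity of marginals on P
  have hpfpos : ∀ i ∈ P, 0 < pf (f i) := fun i hi =>
    lt_of_lt_of_le (hpos i hi) (le_pushp hp i)
  have hpgpos : ∀ i ∈ P, 0 < pg (g i) := fun i hi =>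
    lt_of_lt_of_le (hpos i hi) (le_pushp hp i)
  have hphpos : ∀ i ∈ P, 0 < ph (u (f i)) := fun i hi =>
    lt_of_lt_of_le (hpos i hi) (le_pushp (f := fun i => u (f i)) hp i)
  set q : I → ℝ := fun i => pf (f i) * pg (g i) / ph (u (f i)) with hq
  have hqpos : ∀ i ∈ P, 0 < q i := fun i hi =>
    div_pos (mul_pos (hpfpos i hi) (hpgpos i hi)) (hphpos i hi)
  -- the key bound : ∑ i ∈ P, q i ≤ 1
  have hqsum : ∑ i ∈ P, q i ≤ 1 := by
    rw [← Finset.sum_fiberwise P f q]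
    rw [← hsum, ← sum_pushp f p]
    refine Finset.sum_le_sum fun j _ => ?_
    by_cases hPj : (P.filter (fun i => f i = j)).Nonempty
    · obtain ⟨i₀, hi₀⟩ := hPj
      have hi₀P := (Finset.mem_filter.1 hi₀).1
      have hfi₀ : f i₀ = j := (Finset.mem_filter.1 hi₀).2
      have hphj : 0 < ph (u j) := hfi₀ ▸ hphpos i₀ hi₀P
      have step1 : ∑ i ∈ P.filter (fun i => f i = j), q i
          = (pf j / ph (u j)) * ∑ i ∈ P.filter (fun i => f i = j), pg (g i) := by
        rw [Finset.mul_sum]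
        refine Finset.sum_congr rfl fun i hi => ?_
        have hfi : f i = j := (Finset.mem_filter.1 hi).2
        rw [hq]
        simp only [hfi]
        ring
      have step2 : ∑ i ∈ P.filter (fun i => f i = j), pg (g i) ≤ ph (u j) := by
        have himg : ∑ i ∈ P.filter (fun i => f i = j), pg (g i)
            = ∑ k ∈ (P.filter (fun i => f i = j)).image g, pg k :=
          (Finset.sum_image (fun i hi i' hi' hgg =>
            hinj i i' (((Finset.mem_filter.1 hi).2).trans
              ((Finset.mem_filter.1 hi').2).symm) hgg)).symm
        rw [himg]
        have hsub : (P.filter (fun i => f i = j)).image g ⊆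
            univ.filter (fun k => v k = u j) := by
          intro k hk
          obtain ⟨i, hi, rfl⟩ := Finset.mem_image.1 hk
          have hfi : f i = j := (Finset.mem_filter.1 hi).2
          simp only [mem_filter, mem_univ, true_and]
          rw [← hcomm i, hfi]
        calc ∑ k ∈ (P.filter (fun i => f i = j)).image g, pg k
            ≤ ∑ k ∈ univ.filter (fun k => v k = u j), pg k :=
              Finset.sum_le_sum_of_subset_of_nonneg hsub
                (fun k _ _ => pushp_nonneg hp k)
          _ = ph (u j) := by
              have : pushp (fun i => v (g i)) p (u j) = ph (u j) := by
                rw [hph]; congr 1; ext i; rw [hcomm i]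
              rw [← this, ← pushp_comp g v p (u j)]
      calc ∑ i ∈ P.filter (fun i => f i = j), q i
          = (pf j / ph (u j)) * ∑ i ∈ P.filter (fun i => f i = j), pg (g i) := step1
        _ ≤ (pf j / ph (u j)) * ph (u j) := by
            apply mul_le_mul_of_nonneg_left step2
            exact div_nonneg (pushp_nonneg hp j) (le_of_lt hphj)
        _ = pf j := div_mul_cancel₀ _ (ne_of_gt hphj)
    · rw [Finset.not_nonempty_iff_eq_empty.1 hPj, Finset.sum_empty]
      exact pushp_nonneg hp j
  -- put everything together
  have e2 := ent_pushp_eq_support f p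
  have e3 := ent_pushp_eq_support g p
  have e4 := ent_pushp_eq_support (fun i => u (f i)) p
  rw [← hpf] at e2
  rw [← hpg] at e3
  rw [← hph] at e4
  rw [hentp, e2, e3, e4]
  have key : ∑ i ∈ P, p i * (logb 2 (q i / p i)) ≤ 0 := by
    have hlog2 : (0:ℝ) < Real.log 2 := Real.log_pos (by norm_num)
    calc ∑ i ∈ P, p i * logb 2 (q i / p i)
        ≤ ∑ i ∈ P, (q i - p i) / Real.log 2 := by
          refine Finset.sum_le_sum fun i hi => ?_
          have hpi := hpos i hi
          have hqi := hqpos i hi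
          have hdiv : 0 < q i / p i := div_pos hqi hpi
          rw [Real.logb, div_eq_mul_inv (Real.log _), ← mul_assoc]
          rw [div_eq_mul_inv (q i - p i)]
          apply mul_le_mul_of_nonneg_right _ (inv_nonneg.2 hlog2.le)
          calc p i * Real.log (q i / p i) ≤ p i * (q i / p i - 1) :=
                mul_le_mul_of_nonneg_left (Real.log_le_sub_one_of_pos hdiv) hpi.le
            _ = q i - p i := by field_simp
      _ = ((∑ i ∈ P, q i) - ∑ i ∈ P, p i) / Real.log 2 := by
          rw [← Finset.sum_div, Finset.sum_sub_distrib]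
      _ ≤ 0 := by
          apply div_nonpos_of_nonpos_of_nonneg _ hlog2.le
          have : ∑ i ∈ P, p i = 1 := by
            rw [← hsum]
            symm
            rw [hP, Finset.sum_filter]
            refine Finset.sum_congr rfl fun i _ => ?_
            by_cases h : p i = 0 <;> simp [h]
          rw [this]
          linarith [hqsum]
  have expand : ∀ i ∈ P, p i * logb 2 (q i / p i)
      = p i * logb 2 (pf (f i)) + p i * logb 2 (pg (g i))
        - p i * logb 2 (ph (u (f i))) - p i * logb 2 (p i) := by
    intro i hi
    rw [hq]
    rw [Real.logb_div (ne_of_gt (hqpos i hi)) (ne_of_gt (hpos i hi)),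
      Real.logb_div (ne_of_gt (mul_pos (hpfpos i hi) (hpgpos i hi)))
        (ne_of_gt (hphpos i hi)),
      Real.logb_mul (ne_of_gt (hpfpos i hi)) (ne_of_gt (hpgpos i hi))]
    ring
  rw [Finset.sum_congr rfl expand] at key
  simp only [Finset.sum_sub_distrib, Finset.sum_add_distrib] at key
  linarith [key]

section Meas
open MeasureTheory
set_option linter.unusedSectionVars false

variable {A : Type*} [MeasurableSpace A] [MeasurableSingletonClass A] [Fintype A]

/-- The cylinder set fixing coordinates `s, s+1, …, s+k-1` to the word `w`. -/
def cylSet (s : ℕ) {k : ℕ} (w : Fin k → A) : Set (ℕ → A) :=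
  {x | ∀ i : Fin k, x (i.1 + s) = w i}

lemma cylP_eq_cylSet (μ : Measure (ℕ → A)) {k : ℕ} (w : Fin k → A) :
    cylP μ w = (μ (cylSet 0 w)).toReal := rfl

lemma measurableSet_cylSet (s : ℕ) {k : ℕ} (w : Fin k → A) :
    MeasurableSet (cylSet s w) := by
  have : cylSet s w = ⋂ i : Fin k, (fun x : ℕ → A => x (i.1 + s)) ⁻¹' {w i} := by
    ext x
    simp [cylSet, Set.mem_iInter]
  rw [this]
  exact MeasurableSet.iInter fun i =>
    (measurable_pi_apply _) (measurableSet_singleton _)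

lemma measure_cylSet (μ : Measure (ℕ → A)) (hstat : MeasurePreserving (shift (A := A)) μ μ)
    (s : ℕ) {k : ℕ} (w : Fin k → A) : μ (cylSet s w) = μ (cylSet 0 w) := by
  induction s with
  | zero => rfl
  | succ s ih =>
      have hpre : cylSet (s + 1) w = shift (A := A) ⁻¹' (cylSet s w) := rfl
      rw [hpre, hstat.measure_preimage (measurableSet_cylSet s w).nullMeasurableSet, ih]

lemma cylP_nonneg (μ : Measure (ℕ → A)) {k : ℕ} (w : Fin k → A) : 0 ≤ cylP μ w :=
  ENNReal.toReal_nonneg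

lemma sum_cylP_fiber [DecidableEq A] (μ : Measure (ℕ → A)) [IsProbabilityMeasure μ]
    (hstat : MeasurePreserving (shift (A := A)) μ μ)
    {n k s : ℕ} (hlt : ∀ i : Fin k, i.1 + s < n) (w : Fin k → A) :
    ∑ v ∈ Finset.univ.filter
        (fun v : Fin n → A => ∀ i : Fin k, v ⟨i.1 + s, hlt i⟩ = w i), cylP μ v
      = cylP μ w := by
  classical
  set fib := Finset.univ.filter
      (fun v : Fin n → A => ∀ i : Fin k, v ⟨i.1 + s, hlt i⟩ = w i) with hfib
  have hunion : cylSet s w = ⋃ v ∈ fib, cylSet 0 (v : Fin n → A) := by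
    ext x
    simp only [Set.mem_iUnion]
    constructor
    · intro hx
      refine ⟨fun j : Fin n => x j.1, ?_, ?_⟩
      · simp only [hfib, Finset.mem_filter, Finset.mem_univ, true_and]
        intro i
        exact hx i
      · intro j
        rfl
    · rintro ⟨v, hv, hxv⟩
      simp only [hfib, Finset.mem_filter, Finset.mem_univ, true_and] at hv
      intro i
      have := hxv ⟨i.1 + s, hlt i⟩
      simpa using this.trans (hv i)
  have hdisj : (↑fib : Set (Fin n → A)).PairwiseDisjoint (fun v => cylSet 0 (v : Fin n → A)) := by
    intro v _ v' _ hne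
    rw [Function.onFun, Set.disjoint_left]
    intro x hx hx'
    apply hne
    funext j
    have h1 := hx j
    have h2 := hx' j
    change x (j.1 + 0) = v j at h1
    change x (j.1 + 0) = v' j at h2
    rw [← h1, ← h2]
  have hms : ∀ v ∈ fib, MeasurableSet (cylSet 0 (v : Fin n → A)) :=
    fun v _ => measurableSet_cylSet 0 v
  have hmeas : μ (cylSet s w) = ∑ v ∈ fib, μ (cylSet 0 (v : Fin n → A)) := by
    rw [hunion, measure_biUnion_finset hdisj hms]
  have := measure_cylSet μ hstat s w
  rw [cylP_eq_cylSet, ← this, hmeas, ENNReal.toReal_sum (fun v _ => measure_ne_top μ _)]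
  exact (Finset.sum_congr rfl fun v _ => (cylP_eq_cylSet μ v).symm).symm

lemma pushp_restrict [DecidableEq A] (μ : Measure (ℕ → A)) [IsProbabilityMeasure μ]
    (hstat : MeasurePreserving (shift (A := A)) μ μ)
    {n k s : ℕ} (hlt : ∀ i : Fin k, i.1 + s < n)
    (F : (Fin n → A) → (Fin k → A)) (hF : ∀ v i, F v i = v ⟨i.1 + s, hlt i⟩) :
    pushp F (cylP μ) = cylP μ := by
  funext w
  rw [pushp, ← sum_cylP_fiber μ hstat hlt w]
  refine Finset.sum_congr (Finset.filter_congr fun v _ => ?_) fun _ _ => rfl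
  rw [funext_iff]
  constructor
  · intro h i; rw [← hF v i]; exact h i
  · intro h i; rw [hF v i]; exact h i

lemma sum_cylP (μ : Measure (ℕ → A)) [IsProbabilityMeasure μ]
    (hstat : MeasurePreserving (shift (A := A)) μ μ) (n : ℕ) :
    ∑ v : Fin n → A, cylP μ v = 1 := by
  classical
  have hlt : ∀ i : Fin 0, i.1 + 0 < n := fun i => i.elim0
  have h := sum_cylP_fiber μ hstat (n := n) hlt (Fin.elim0)
  rw [Finset.filter_true_of_mem (fun v _ => fun i => i.elim0)] at h
  rw [h, cylP_eq_cylSet]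
  have : cylSet 0 (Fin.elim0 : Fin 0 → A) = Set.univ :=
    Set.eq_univ_of_forall fun x => fun i => i.elim0
  rw [this, measure_univ, ENNReal.toReal_one]

lemma blockH_eq_ent (μ : Measure (ℕ → A)) (L : ℕ) :
    blockH μ L = ent (cylP μ (L := L)) := rfl

lemma blockH_concave [DecidableEq A] (μ : Measure (ℕ → A)) [IsProbabilityMeasure μ]
    (hstat : MeasurePreserving (shift (A := A)) μ μ) (n : ℕ) :
    blockH μ (n + 2) + blockH μ n ≤ 2 * blockH μ (n + 1) := by
  classical
  have hlt0 : ∀ i : Fin (n+1), i.1 + 0 < n + 2 := fun i => by have := i.isLt; omega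
  have hlt1 : ∀ i : Fin (n+1), i.1 + 1 < n + 2 := fun i => by have := i.isLt; omega
  have hltm : ∀ i : Fin n, i.1 + 1 < n + 2 := fun i => by have := i.isLt; omega
  set f : (Fin (n+2) → A) → (Fin (n+1) → A) := fun v i => v ⟨i.1 + 0, hlt0 i⟩ with hf
  set g : (Fin (n+2) → A) → (Fin (n+1) → A) := fun v i => v ⟨i.1 + 1, hlt1 i⟩ with hg
  have hlt0' : ∀ i : Fin n, i.1 + 1 < n + 1 := fun i => by have := i.isLt; omega
  have hlt2' : ∀ i : Fin n, i.1 + 0 < n + 1 := fun i => by have := i.isLt; omega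
  set u : (Fin (n+1) → A) → (Fin n → A) := fun w i => w ⟨i.1 + 1, hlt0' i⟩ with hu
  set v' : (Fin (n+1) → A) → (Fin n → A) := fun w i => w ⟨i.1 + 0, hlt2' i⟩ with hv'
  have hcomm : ∀ x, u (f x) = v' (g x) := fun x => rfl
  have hinj : ∀ x x', f x = f x' → g x = g x' → x = x' := by
    intro x x' hfx hgx
    funext j
    rcases Nat.lt_or_ge j.1 (n + 1) with hj | hj
    · have := congrFun hfx ⟨j.1, hj⟩
      simp only [hf] at this
      have hjj : (⟨j.1 + 0, hlt0 ⟨j.1, hj⟩⟩ : Fin (n+2)) = j := by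
        apply Fin.ext; simp
      rwa [hjj] at this
    · have hjn : j.1 = n + 1 := by have := j.isLt; omega
      have := congrFun hgx ⟨n, by omega⟩
      simp only [hg] at this
      have hjj : (⟨n + 1, hlt1 ⟨n, by omega⟩⟩ : Fin (n+2)) = j := by
        apply Fin.ext; simp [hjn]
      rwa [hjj] at this
  have hssa := ssa (cylP μ) (cylP_nonneg μ) (sum_cylP μ hstat (n + 2))
    f g u v' hcomm hinj
  have hF : pushp f (cylP μ) = cylP μ :=
    pushp_restrict μ hstat hlt0 f (fun v i => rfl)
  have hG : pushp g (cylP μ) = cylP μ :=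
    pushp_restrict μ hstat hlt1 g (fun v i => rfl)
  have hM : pushp (fun x => u (f x)) (cylP μ) = cylP μ :=
    pushp_restrict μ hstat hltm (fun x => u (f x)) (fun v i => rfl)
  rw [hF, hG, hM] at hssa
  rw [blockH_eq_ent μ (n+2), blockH_eq_ent μ (n+1), blockH_eq_ent μ n]
  linarith [hssa]

end Meas


open MeasureTheory in
/-- With the finite-`L` excess-entropy estimates
`E(L) = H(L) - L·(H(L) - H(L-1))` for `L ≥ 1` and `E'(L) = 2H(L/2) - H(L)` for even
`L ≥ 2` (written `L = 2M`, `M ≥ 1`): `E'(L) ≤ E(L)` for every even `L ≥ 2`, and if the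
excess entropy `E = Σ_{M=1}^∞ [h_μ(M) - h_μ]` converges, then `E(L) ≤ E` for every
`L ≥ 1`. -/
theorem finite_L_excess_entropy_estimates_bounds
    {A : Type*} [MeasurableSpace A] [MeasurableSingletonClass A] [Fintype A]
    (hA : 2 ≤ Fintype.card A)
    (μ : Measure (ℕ → A)) [IsProbabilityMeasure μ]
    (hstat : MeasurePreserving (shift (A := A)) μ μ)
    (hμ : ℝ) (hrate : Tendsto (fun L : ℕ => blockH μ L / L) atTop (nhds hμ)) :
    (∀ M : ℕ, 1 ≤ M →
      2 * blockH μ M - blockH μ (2 * M) ≤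
        blockH μ (2 * M) - (2 * M : ℝ) * (blockH μ (2 * M) - blockH μ (2 * M - 1))) ∧
    (∀ E : ℝ,
      Tendsto (fun N : ℕ => ∑ L ∈ Finset.range N, (blockH μ (L + 1) - blockH μ L - hμ))
        atTop (nhds E) →
      ∀ L : ℕ, 1 ≤ L →
        blockH μ L - (L : ℝ) * (blockH μ L - blockH μ (L - 1)) ≤ E) := by
  classical
  have hconc : ∀ n : ℕ, blockH μ (n + 2) + blockH μ n ≤ 2 * blockH μ (n + 1) :=
    blockH_concave μ hstat
  set d : ℕ → ℝ := fun n => blockH μ (n + 1) - blockH μ n with hd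
  have hanti : Antitone d := antitone_nat_of_succ_le fun n => by
    have := hconc n
    simp only [hd]
    have h21 : n + 1 + 1 = n + 2 := by omega
    rw [h21]
    linarith
  have hH0 : blockH μ 0 = 0 := by
    rw [blockH, Finset.sum_eq_zero, neg_zero]
    intro w _
    have hc : cylP μ w = 1 := by
      rw [cylP]
      have : {x : ℕ → A | ∀ i : Fin 0, x i.1 = w i} = Set.univ :=
        Set.eq_univ_of_forall fun x i => i.elim0
      rw [this, measure_univ, ENNReal.toReal_one]
    rw [hc, Real.logb_one, mul_zero]
  have htel : ∀ L : ℕ, blockH μ L = ∑ m ∈ Finset.range L, d m := by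
    intro L
    have h := Finset.sum_range_sub (fun n => blockH μ n) L
    simp only [hd]
    rw [h, hH0, sub_zero]
  constructor
  · -- part (a)
    intro M hM
    have h2M : 2 * M - 1 + 1 = 2 * M := by omega
    have hdd : blockH μ (2 * M) - blockH μ (2 * M - 1) = d (2 * M - 1) := by
      simp only [hd]
      rw [h2M]
    have hsumIco : blockH μ (2 * M) - blockH μ M
        = ∑ m ∈ Finset.Ico M (2 * M), d m := by
      rw [htel (2 * M), htel M, Finset.sum_Ico_eq_sub _ (by omega)]
    have hbound : (M : ℝ) * d (2 * M - 1) ≤ ∑ m ∈ Finset.Ico M (2 * M), d m := by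
      have hle : ∀ m ∈ Finset.Ico M (2 * M), d (2 * M - 1) ≤ d m := fun m hm => by
        have := (Finset.mem_Ico.1 hm).2
        exact hanti (by omega)
      have := Finset.card_nsmul_le_sum (Finset.Ico M (2 * M)) d (d (2 * M - 1)) hle
      rwa [Nat.card_Ico, nsmul_eq_mul, Nat.cast_sub (by omega),
        show ((2 * M : ℕ) : ℝ) - (M : ℝ) = (M : ℝ) by push_cast; ring] at this
    rw [hdd]
    push_cast
    linarith [hbound, hsumIco]
  · -- part (b)
    intro E hE L hL
    set S : ℕ → ℝ := fun N => ∑ L ∈ Finset.range N, (blockH μ (L + 1) - blockH μ L - hμ)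
      with hS
    have hdiff : Tendsto (fun N => S (N + 1) - S N) atTop (nhds (E - E)) :=
      (hE.comp (tendsto_add_atTop_nat 1)).sub hE
    have heq : (fun N => S (N + 1) - S N) = fun N => d N - hμ := by
      funext N
      simp only [hS, hd]
      rw [Finset.sum_range_succ]
      ring
    rw [heq, sub_self] at hdiff
    have hterm0 : Tendsto d atTop (nhds hμ) := by
      have := hdiff.add_const hμ
      simpa using this
    have hge : ∀ m : ℕ, hμ ≤ d m := fun m => hanti.le_of_tendsto hterm0 m
    have hmono : Monotone S := monotone_nat_of_le_succ fun N => by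
      simp only [hS]
      rw [Finset.sum_range_succ]
      have := hge N
      simp only [hd] at this
      linarith
    have hSle : S L ≤ E := hmono.ge_of_tendsto hE L
    have hdd : blockH μ L - blockH μ (L - 1) = d (L - 1) := by
      simp only [hd]
      have hL1 : L - 1 + 1 = L := by omega
      rw [hL1]
    have hsplit : S L = (∑ m ∈ Finset.range L, d m) - (L : ℝ) * hμ := by
      simp only [hS, hd]
      rw [Finset.sum_sub_distrib, Finset.sum_const, Finset.card_range, nsmul_eq_mul]
    have hnn : 0 ≤ (L : ℝ) * (d (L - 1) - hμ) :=
      mul_nonneg (Nat.cast_nonneg L) (by linarith [hge (L - 1)])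
    rw [hdd, htel L]
    linarith [hSle, hsplit, hnn]
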